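/- Let G = (V,E) be a finite simple graph with maximum degree Δ(G), let m ≥ 1, and let k₁, k₂, …, k_m be nonnegative integers with k₁ + k₂ + ⋯ + k_m ≥ Δ(G) − m + 1. Then V can be partitioned into sets V₁, V₂, …, V_m such that the induced subgraph G[V_i] has maximum degree at most k_i, for all i ∈ {1, …, m}. -/

import Mathlib

open SimpleGraph

/-- Cast an integer grid point to a real point. -/
def castPt {d : ℕ} (p : Fin d → ℤ) : Fin d → ℝ := fun i => (p i : ℝ)

/-- The grid points lying on the closed segment in `ℝ^d` joining `a` and `b`. -/
def segGridPts {d : ℕ} (a b : Fin d → ℤ) : Set (Fin d → ℤ) :=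
  {p | castPt p ∈ segment ℝ (castPt a) (castPt b)}

/-- `φ` is a grid drawing of `G` in `ℤ^d`: it is injective and no vertex image other than the
endpoints lies on the closed segment representing an edge. -/
def IsGridDrawing {V : Type*} {d : ℕ} (G : SimpleGraph V) (φ : V → Fin d → ℤ) : Prop :=
  Function.Injective φ ∧
    ∀ u v w : V, G.Adj u v →
      castPt (φ w) ∈ segment ℝ (castPt (φ u)) (castPt (φ v)) → w = u ∨ w = v

/-- `G` is `q`-locatable in `ℤ^d`: it has a grid drawing in which every edge segment contains
at most `q` grid points. -/
def IsQLocatable {V : Type*} (G : SimpleGraph V) (d q : ℕ) : Prop :=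
  ∃ φ : V → Fin d → ℤ, IsGridDrawing G φ ∧
    ∀ u v : V, G.Adj u v → (segGridPts (φ u) (φ v)).ncard ≤ q

/-- A primitive grid drawing: every edge segment contains exactly its two endpoints
as grid points. -/
def IsPrimitiveDrawing {V : Type*} {d : ℕ} (G : SimpleGraph V) (φ : V → Fin d → ℤ) : Prop :=
  IsGridDrawing G φ ∧ ∀ u v : V, G.Adj u v → segGridPts (φ u) (φ v) = {φ u, φ v}

/-- `G` is locatable in `ℤ^d`: it has a primitive grid drawing in `ℤ^d`. -/
def IsLocatable {V : Type*} (G : SimpleGraph V) (d : ℕ) : Prop :=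
  ∃ φ : V → Fin d → ℤ, IsPrimitiveDrawing G φ

/-- The rank of a grid point in `ℤ^d`: the tuple of its first `d - 1` coordinates. -/
def rank {d : ℕ} (p : Fin d → ℤ) : Fin (d - 1) → ℤ :=
  fun i => p (Fin.castLE (Nat.sub_le d 1) i)

/-- `G` is embeddable on `l` columns: it has a grid drawing in `ℤ²` in which the first
coordinates of the vertex images take at most `l` distinct values. -/
def EmbeddableOnCols {V : Type*} (G : SimpleGraph V) (l : ℕ) : Prop :=
  ∃ φ : V → Fin 2 → ℤ, IsGridDrawing G φ ∧ (Set.range fun v => φ v 0).ncard ≤ l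

/-- `G` can be located on `l` columns in `ℤ^d`: it has a primitive grid drawing in `ℤ^d`
using at most `l` columns. -/
def LocatableOnCols {V : Type*} (G : SimpleGraph V) (d l : ℕ) : Prop :=
  ∃ φ : V → Fin d → ℤ, IsPrimitiveDrawing G φ ∧ (Set.range fun v => rank (φ v)).ncard ≤ l

/-- A linear forest: an acyclic graph with maximum degree at most two
(i.e. a disjoint union of paths). -/
def IsLinearForest {W : Type*} (H : SimpleGraph W) : Prop :=
  H.IsAcyclic ∧ ∀ v : W, {w | H.Adj v w}.ncard ≤ 2

theorem lovasz_partition {V : Type*} [Fintype V] (G : SimpleGraph V)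
    [DecidableRel G.Adj] (m : ℕ) (hm : 1 ≤ m) (k : Fin m → ℕ)
    (h : (G.maxDegree : ℤ) - m + 1 ≤ ∑ i, (k i : ℤ)) :
    ∃ P : Fin m → Set V, (∀ v : V, ∃! i, v ∈ P i) ∧
      ∀ i : Fin m, ∀ v ∈ P i, {w : V | w ∈ P i ∧ G.Adj v w}.ncard ≤ k i := by
  classical
  obtain ⟨f, -, hf⟩ := Finset.exists_min_image (Finset.univ : Finset (V → Fin m))
    (fun f => (∑ u, ∑ w, if G.Adj u w ∧ f u = f w then (1:ℤ) else 0)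
      - ∑ u, 2 * (k (f u) : ℤ)) ⟨fun _ => ⟨0, hm⟩, Finset.mem_univ _⟩
  set D : V → Fin m → ℤ := fun v c => ∑ w, if G.Adj v w ∧ f w = c then (1:ℤ) else 0 with hD
  have main : ∀ v, D v (f v) ≤ (k (f v) : ℤ) := by
    intro v
    by_contra hlt
    push_neg at hlt
    -- degree bound
    have hdegsum : ∑ c, D v c ≤ (G.maxDegree : ℤ) := by
      have h1 : ∑ c, D v c = ((Finset.univ.filter fun w => G.Adj v w).card : ℤ) := by
        simp only [hD]
        rw [Finset.sum_comm, Finset.card_filter]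
        push_cast
        refine Finset.sum_congr rfl fun w _ => ?_
        by_cases hadj : G.Adj v w
        · simp [hadj, Finset.sum_ite_eq]
        · simp [hadj]
      have h2 : (Finset.univ.filter fun w => G.Adj v w) = G.neighborFinset v := by
        ext w; simp [SimpleGraph.mem_neighborFinset]
      rw [h1, h2]
      exact_mod_cast G.degree_le_maxDegree v
    obtain ⟨j, hjle⟩ : ∃ j, D v j ≤ (k j : ℤ) := by
      by_contra hno
      push_neg at hno
      have hge : ∑ c, ((k c : ℤ) + 1) ≤ ∑ c, D v c :=
        Finset.sum_le_sum fun c _ => Int.add_one_le_iff.mpr (hno c)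
      have hsum : ∑ c : Fin m, ((k c : ℤ) + 1) = (∑ c, (k c : ℤ)) + m := by
        rw [Finset.sum_add_distrib]; simp
      rw [hsum] at hge
      linarith
    have hji : j ≠ f v := by rintro rfl; linarith
    set g : V → Fin m := Function.update f v j with hg
    have hgv : g v = j := Function.update_self v j f
    have hgu : ∀ u, u ≠ v → g u = f u := fun u hu => Function.update_of_ne hu j f
    -- row at v
    have hrow_g : (∑ w, if G.Adj v w ∧ g v = g w then (1:ℤ) else 0) = D v j := by
      simp only [hD]
      refine Finset.sum_congr rfl fun w _ => ?_
      by_cases hw : w = v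
      · subst hw; simp [G.irrefl]
      · rw [hgv, hgu w hw]; simp [eq_comm]
    have hrow_f : (∑ w, if G.Adj v w ∧ f v = f w then (1:ℤ) else 0) = D v (f v) := by
      simp only [hD]
      refine Finset.sum_congr rfl fun w _ => ?_
      simp [eq_comm]
    -- column sums
    have hcol_j : (∑ u, if G.Adj u v ∧ f u = j then (1:ℤ) else 0) = D v j := by
      simp only [hD]
      refine Finset.sum_congr rfl fun u _ => ?_
      simp only [G.adj_comm u v]
    have hcol_fv : (∑ u, if G.Adj u v ∧ f u = f v then (1:ℤ) else 0) = D v (f v) := by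
      simp only [hD]
      refine Finset.sum_congr rfl fun u _ => ?_
      simp only [G.adj_comm u v]
    -- row for u ≠ v
    have hrow_u : ∀ u, u ≠ v →
        (∑ w, if G.Adj u w ∧ g u = g w then (1:ℤ) else 0)
        = (∑ w, if G.Adj u w ∧ f u = f w then (1:ℤ) else 0)
          + ((if G.Adj u v ∧ f u = j then (1:ℤ) else 0)
            - (if G.Adj u v ∧ f u = f v then (1:ℤ) else 0)) := by
      intro u hu
      have hpt : ∀ w, (if G.Adj u w ∧ g u = g w then (1:ℤ) else 0)
          = (if G.Adj u w ∧ f u = f w then (1:ℤ) else 0)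
            + (if w = v then ((if G.Adj u v ∧ f u = j then (1:ℤ) else 0)
              - (if G.Adj u v ∧ f u = f v then (1:ℤ) else 0)) else 0) := by
        intro w
        by_cases hw : w = v
        · subst hw
          rw [hgu u hu, hgv]
          simp
        · rw [hgu u hu, hgu w hw]
          simp [hw]
      rw [Finset.sum_congr rfl (fun w _ => hpt w), Finset.sum_add_distrib]
      simp [Finset.sum_ite_eq']
    -- assemble E difference
    have hE : (∑ u, ∑ w, if G.Adj u w ∧ g u = g w then (1:ℤ) else 0)
        = (∑ u, ∑ w, if G.Adj u w ∧ f u = f w then (1:ℤ) else 0)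
          + 2 * D v j - 2 * D v (f v) := by
      rw [← Finset.add_sum_erase Finset.univ _ (Finset.mem_univ v),
        ← Finset.add_sum_erase Finset.univ
          (fun u => ∑ w, if G.Adj u w ∧ f u = f w then (1:ℤ) else 0) (Finset.mem_univ v)]
      rw [hrow_g, hrow_f]
      have hrest : ∑ u ∈ Finset.univ.erase v, (∑ w, if G.Adj u w ∧ g u = g w then (1:ℤ) else 0)
          = (∑ u ∈ Finset.univ.erase v, ∑ w, if G.Adj u w ∧ f u = f w then (1:ℤ) else 0)
            + (D v j - D v (f v)) := by
        rw [Finset.sum_congr rfl (fun u hu => hrow_u u (Finset.ne_of_mem_erase hu)),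
          Finset.sum_add_distrib]
        congr 1
        have hzero : ((if G.Adj v v ∧ f v = j then (1:ℤ) else 0)
            - (if G.Adj v v ∧ f v = f v then (1:ℤ) else 0)) = 0 := by simp [G.irrefl]
        have herase : (∑ u ∈ Finset.univ.erase v,
            ((if G.Adj u v ∧ f u = j then (1:ℤ) else 0)
              - (if G.Adj u v ∧ f u = f v then (1:ℤ) else 0)))
            = ∑ u, ((if G.Adj u v ∧ f u = j then (1:ℤ) else 0)
              - (if G.Adj u v ∧ f u = f v then (1:ℤ) else 0)) :=
          Finset.sum_erase _ hzero
        rw [herase, Finset.sum_sub_distrib, hcol_j, hcol_fv]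
      rw [hrest]
      ring
    -- K difference
    have hK : (∑ u, 2 * (k (g u) : ℤ))
        = (∑ u, 2 * (k (f u) : ℤ)) + 2 * (k j : ℤ) - 2 * (k (f v) : ℤ) := by
      rw [← Finset.add_sum_erase Finset.univ (fun u => 2 * (k (g u) : ℤ)) (Finset.mem_univ v),
        ← Finset.add_sum_erase Finset.univ (fun u => 2 * (k (f u) : ℤ)) (Finset.mem_univ v)]
      rw [hgv]
      rw [Finset.sum_congr rfl (fun u hu => by rw [hgu u (Finset.ne_of_mem_erase hu)])]
      ring
    have hmin := hf g (Finset.mem_univ g)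
    rw [hE, hK] at hmin
    linarith
  -- build the partition
  refine ⟨fun i => {v | f v = i}, fun v => ⟨f v, rfl, fun i hi => hi.symm⟩, ?_⟩
  intro i v hv
  have hv' : f v = i := hv
  have hset : {w : V | w ∈ {v | f v = i} ∧ G.Adj v w}
      = ↑(Finset.univ.filter fun w => G.Adj v w ∧ f w = i) := by
    ext w
    simp [Set.mem_setOf_eq, and_comm]
  rw [hset, Set.ncard_coe_finset]
  have hm2 := main v
  rw [hv'] at hm2
  have hcast : ((Finset.univ.filter fun w => G.Adj v w ∧ f w = i).card : ℤ) = D v i := by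
    simp only [hD]
    rw [Finset.card_filter]
    push_cast
    rfl
  have : ((Finset.univ.filter fun w => G.Adj v w ∧ f w = i).card : ℤ) ≤ (k i : ℤ) := by
    rw [hcast]; exact hm2
  exact_mod_cast this
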